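/- Let p ≥ 3 be prime, θ, α ∈ ℚ_p with |θ − 1|_p = 1/p, |α|_p = 1, |1 − α|_p ≤ 1/p², and let λ be a weight with λ(0) = 1, λ(1) = α, |λ(i)|_p < 1 for i ≥ 2, |λ(i)|_p → 0, δ := max_{i≥2}|λ(i)|_p > 0. Then F⁻ maps B_{δ/p} into B_{δ/p}; more precisely, for every x ∈ B_{δ/p} one has |(F⁻(x))_i|_p ≤ |λ(i)|_p/p ≤ δ/p for all i ≥ 2. -/

import Mathlib

open Filter

/-- Under the conditions `|θ-1|_p = 1/p`, `|α|_p = 1`,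
`|1-α|_p ≤ 1/p²`, and with a weight `λ` satisfying `λ(0) = 1`, `λ(1) = α`,
`|λ(i)|_p < 1` for `i ≥ 2`, `|λ(i)|_p → 0`, `δ = max_{i≥2}|λ(i)|_p > 0`,
the map `F⁻` sends the ball `B_{δ/p}` into itself; more precisely, for every
`x ∈ B_{δ/p}` one has `|(F⁻(x))_i|_p ≤ |λ(i)|_p/p ≤ δ/p` for all `i ≥ 2`.
Here `X = Σ_{j≥2} x_j`, `s_X` is the square root of
`D_X = (X + θ(1-α))² + 4α(X+1)` with `|s_X - 2|_p < 1`, and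
`(F⁻(x))_i = λ(i)(2(θ-1)x_i + (α-1)θ + X - s_X + 2)/((α+1)θ + X - s_X)`. -/
theorem potts_Fminus_maps_ball (p : ℕ) [Fact p.Prime] (hp : 3 ≤ p)
    (θ α : ℚ_[p]) (hθ : ‖θ - 1‖ = 1 / (p : ℝ)) (hα : ‖α‖ = 1)
    (hα1 : ‖1 - α‖ ≤ 1 / (p : ℝ) ^ 2)
    (L : ℕ → ℚ_[p]) (hL0 : L 0 = 1) (hL1 : L 1 = α)
    (hLlt : ∀ i, 2 ≤ i → ‖L i‖ < 1)
    (hLten : Tendsto (fun i => ‖L i‖) atTop (nhds 0))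
    (δ : ℝ) (hδpos : 0 < δ)
    (hδub : ∀ i, 2 ≤ i → ‖L i‖ ≤ δ) (hδmax : ∃ i, 2 ≤ i ∧ ‖L i‖ = δ)
    (x : ℕ → ℚ_[p])
    (hxten : Tendsto (fun i => ‖x i‖) atTop (nhds 0))
    (hxB : ∀ i, 2 ≤ i → ‖x i‖ ≤ δ / (p : ℝ))
    (X : ℚ_[p]) (hX : X = ∑' j : ℕ, x (j + 2))
    (sX : ℚ_[p]) (hsX : sX ^ 2 = (X + θ * (1 - α)) ^ 2 + 4 * α * (X + 1))
    (hsX2 : ‖sX - 2‖ < 1) :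
    ∀ i, 2 ≤ i →
      ‖L i * ((2 * (θ - 1) * x i + (α - 1) * θ + X - sX + 2) /
          ((α + 1) * θ + X - sX))‖ ≤ ‖L i‖ / (p : ℝ) ∧
      ‖L i‖ / (p : ℝ) ≤ δ / (p : ℝ) := by
  have hp1 : (1:ℝ) < p := by exact_mod_cast lt_of_lt_of_le (by norm_num) hp
  have hp0 : (0:ℝ) < p := by linarith
  -- δ < 1
  obtain ⟨i0, hi0, hi0eq⟩ := hδmax
  have hδ1 : δ < 1 := hi0eq ▸ hLlt i0 hi0
  -- norms of small constants
  have h2 : ‖(2:ℚ_[p])‖ = 1 := by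
    have hnd : ¬ ((p:ℤ) ∣ 2) := by
      intro hd
      have := Int.le_of_dvd (by norm_num) hd
      omega
    have h1 : ¬ ‖((2:ℤ):ℚ_[p])‖ < 1 := by
      rw [Padic.norm_intCast_lt_one_iff]; exact hnd
    have h2' := Padic.norm_int_le_one (p := p) 2
    push_cast at h1 h2'
    linarith [lt_or_eq_of_le h2']
  have h4 : ‖(4:ℚ_[p])‖ = 1 := by
    have : (4:ℚ_[p]) = 2 * 2 := by norm_num
    rw [this, norm_mul, h2]; norm_num
  have hθ1 : ‖θ‖ ≤ 1 := by
    calc ‖θ‖ = ‖1 + (θ - 1)‖ := by ring_nf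
    _ ≤ max ‖(1:ℚ_[p])‖ ‖θ - 1‖ := Padic.nonarchimedean _ _
    _ ≤ 1 := by
        rw [norm_one, hθ]
        apply max_le le_rfl
        rw [div_le_one hp0]; linarith
  have hαm : ‖α - 1‖ ≤ 1 / (p:ℝ)^2 := by rwa [← norm_neg, neg_sub]
  -- ‖X‖ ≤ δ/p
  have hXn : ‖X‖ ≤ δ / p := by
    rw [hX]
    exact IsUltrametricDist.norm_tsum_le_of_forall_le_of_nonneg (by positivity)
      (fun j => hxB _ (by omega))
  have hd1p : δ / (p:ℝ) ≤ 1 / p := by gcongr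
  have hXp : ‖X‖ ≤ 1 / p := hXn.trans hd1p
  have hpp : 1 / (p:ℝ)^2 ≤ 1 / p := by
    rw [div_le_div_iff₀ (by positivity) hp0]
    nlinarith
  have hp2lt : 1 / (p:ℝ)^2 < 1 / p := by
    rw [div_lt_div_iff₀ (by positivity) hp0]
    nlinarith
  -- ‖sX + 2‖ = 1
  have hsp2 : ‖sX + 2‖ = 1 := by
    have : sX + 2 = (sX - 2) + 4 := by ring
    rw [this, Padic.add_eq_max_of_ne (by rw [h4]; exact ne_of_lt hsX2), h4]
    exact max_eq_right hsX2.le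
  -- ‖X + θ(1-α)‖ ≤ 1/p
  have hA : ‖X + θ * (1 - α)‖ ≤ 1 / p := by
    refine (Padic.nonarchimedean _ _).trans (max_le hXp ?_)
    rw [norm_mul]
    calc ‖θ‖ * ‖1 - α‖ ≤ 1 * (1 / (p:ℝ)^2) :=
          mul_le_mul hθ1 hα1 (norm_nonneg _) (by norm_num)
    _ ≤ 1 / p := by rw [one_mul]; exact hpp
  -- ‖sX - 2‖ ≤ 1/p
  have hsd : ‖sX - 2‖ ≤ 1 / p := by
    have key : (sX - 2) * (sX + 2) = (X + θ * (1 - α)) ^ 2 + 4 * α * X + 4 * (α - 1) := by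
      linear_combination hsX
    have hn : ‖(X + θ * (1 - α)) ^ 2 + 4 * α * X + 4 * (α - 1)‖ ≤ 1 / p := by
      refine (Padic.nonarchimedean _ _).trans (max_le ((Padic.nonarchimedean _ _).trans (max_le ?_ ?_)) ?_)
      · rw [pow_two, norm_mul]
        calc ‖X + θ * (1 - α)‖ * ‖X + θ * (1 - α)‖ ≤ (1/p) * 1 := by
              apply mul_le_mul hA _ (norm_nonneg _) (by positivity)
              exact hA.trans (by rw [div_le_one hp0]; linarith)
        _ = 1 / p := by ring
      · rw [norm_mul, norm_mul, h4, hα, one_mul, one_mul]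
        exact hXp
      · rw [norm_mul, h4, one_mul]
        exact hαm.trans hpp
    calc ‖sX - 2‖ = ‖sX - 2‖ * ‖sX + 2‖ := by rw [hsp2, mul_one]
    _ = ‖(sX - 2) * (sX + 2)‖ := (norm_mul _ _).symm
    _ ≤ 1 / p := by rw [key]; exact hn
  -- ‖X - sX + 2‖ ≤ 1/p²
  have hu : ‖X - sX + 2‖ ≤ 1 / (p:ℝ)^2 := by
    have key : (X - sX + 2) * (sX + 2) =
        X * (sX - 2) + 4 * (1 - α) * X - (X + θ * (1 - α)) ^ 2 - 4 * (α - 1) := by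
      linear_combination -hsX
    have hd1 : δ / (p:ℝ) ≤ 1 / p := hd1p
    have hn : ‖X * (sX - 2) + 4 * (1 - α) * X - (X + θ * (1 - α)) ^ 2 - 4 * (α - 1)‖
        ≤ 1 / (p:ℝ)^2 := by
      rw [sub_eq_add_neg, sub_eq_add_neg]
      refine (Padic.nonarchimedean _ _).trans (max_le ((Padic.nonarchimedean _ _).trans (max_le ((Padic.nonarchimedean _ _).trans (max_le ?_ ?_)) ?_)) ?_)
      · rw [norm_mul]
        calc ‖X‖ * ‖sX - 2‖ ≤ (1/p) * (1/p) :=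
              mul_le_mul hXp hsd (norm_nonneg _) (by positivity)
        _ = 1 / (p:ℝ)^2 := by ring
      · rw [norm_mul, norm_mul, h4, one_mul]
        calc ‖1 - α‖ * ‖X‖ ≤ (1/(p:ℝ)^2) * 1 := by
              apply mul_le_mul hα1 (hXp.trans _) (norm_nonneg _) (by positivity)
              rw [div_le_one hp0]; linarith
        _ = 1 / (p:ℝ)^2 := by ring
      · rw [norm_neg, pow_two, norm_mul]
        calc ‖X + θ * (1 - α)‖ * ‖X + θ * (1 - α)‖ ≤ (1/p) * (1/p) :=
              mul_le_mul hA hA (norm_nonneg _) (by positivity)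
        _ = 1 / (p:ℝ)^2 := by ring
      · rw [norm_neg, norm_mul, h4, one_mul]
        exact hαm
    calc ‖X - sX + 2‖ = ‖X - sX + 2‖ * ‖sX + 2‖ := by rw [hsp2, mul_one]
    _ = ‖(X - sX + 2) * (sX + 2)‖ := (norm_mul _ _).symm
    _ ≤ 1 / (p:ℝ)^2 := by rw [key]; exact hn
  -- denominator norm = 1/p
  have hsmall : ‖(α - 1) * θ + (X - sX + 2)‖ ≤ 1 / (p:ℝ)^2 := by
    refine (Padic.nonarchimedean _ _).trans (max_le ?_ hu)
    rw [norm_mul]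
    calc ‖α - 1‖ * ‖θ‖ ≤ (1/(p:ℝ)^2) * 1 :=
          mul_le_mul hαm hθ1 (norm_nonneg _) (by positivity)
    _ = 1 / (p:ℝ)^2 := by ring
  have h2θ : ‖2 * (θ - 1)‖ = 1 / p := by rw [norm_mul, h2, one_mul, hθ]
  have hden : ‖(α + 1) * θ + X - sX‖ = 1 / p := by
    have hsplit : (α + 1) * θ + X - sX = 2 * (θ - 1) + ((α - 1) * θ + (X - sX + 2)) := by
      ring
    rw [hsplit, Padic.add_eq_max_of_ne
      (by rw [h2θ]; exact fun h => absurd (h ▸ hsmall) (not_le.mpr hp2lt)),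
      h2θ, max_eq_left (hsmall.trans hp2lt.le)]
  intro i hi
  have hxi : ‖x i‖ ≤ δ / p := hxB i hi
  -- numerator norm ≤ 1/p²
  have hnum : ‖2 * (θ - 1) * x i + (α - 1) * θ + X - sX + 2‖ ≤ 1 / (p:ℝ)^2 := by
    have hsplit : 2 * (θ - 1) * x i + (α - 1) * θ + X - sX + 2 =
        2 * (θ - 1) * x i + ((α - 1) * θ + (X - sX + 2)) := by ring
    rw [hsplit]
    refine (Padic.nonarchimedean _ _).trans (max_le ?_ hsmall)
    rw [norm_mul, h2θ]
    calc (1/(p:ℝ)) * ‖x i‖ ≤ (1/p) * (δ/p) := by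
          apply mul_le_mul_of_nonneg_left hxi (by positivity)
    _ ≤ (1/p) * (1/p) := by
          apply mul_le_mul_of_nonneg_left _ (by positivity)
          exact hd1p
    _ = 1 / (p:ℝ)^2 := by ring
  constructor
  · rw [norm_mul, norm_div, hden]
    calc ‖L i‖ * (‖2 * (θ - 1) * x i + (α - 1) * θ + X - sX + 2‖ / (1/(p:ℝ)))
        ≤ ‖L i‖ * ((1/(p:ℝ)^2) / (1/(p:ℝ))) := by
          apply mul_le_mul_of_nonneg_left _ (norm_nonneg _)
          gcongr
    _ = ‖L i‖ / p := by field_simp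
  · gcongr
    exact hδub i hi
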